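/- (No effective totalization) Let A ⊆ ℕ be an infinite computably enumerable set and let θ be a quasi-Gödel numbering of S_A. Then there is no total computable q : ℕ → ℕ such that for every i with θ i an initial-segment function for A, the function θ (q i) is total and graph(θ i) ⊊ graph(θ (q i)), where graph(r) = {Nat.pair x z | r x = Part.some z}. That is, although every initial-segment function extends to a total computable function, no total computable function can produce, from any index of an initial-segment function, an index of a total extension of it. -/

import Mathlib

/-- `r : ℕ →. ℕ` is an initial-segment function for `A`: its domain is empty or
equals `{m | m < a}` for some `a ∈ A`. -/
def IsInitSeg (A : Set ℕ) (r : ℕ →. ℕ) : Prop :=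
  {x : ℕ | (r x).Dom} = (∅ : Set ℕ) ∨ ∃ a ∈ A, {x : ℕ | (r x).Dom} = {m : ℕ | m < a}

/-- `SA A` is the class of unary partial functions that are either total computable
or initial-segment functions for `A`. -/
def SA (A : Set ℕ) : Set (ℕ →. ℕ) :=
  {r | (∃ f : ℕ → ℕ, Computable f ∧ ∀ x, r x = Part.some (f x)) ∨ IsInitSeg A r}

/-- The extended graph of a unary partial function. -/
def graphE (q : ℕ →. ℕ) : Set ℕ :=
  {n | ∃ y, n = Nat.pair y 0} ∪ {n | ∃ x z, q x = Part.some z ∧ n = Nat.pair x (z + 1)}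

/-- The graph of a unary partial function. -/
def pgraph (q : ℕ →. ℕ) : Set ℕ :=
  {n | ∃ x z, q x = Part.some z ∧ n = Nat.pair x z}

/-- Condition (QGN I): the extended graph of the universal function of `θ` is
enumerated by a total computable function. -/
def QGN1 (θ : ℕ → ℕ →. ℕ) : Prop :=
  ∃ h : ℕ → ℕ, Computable h ∧
    Set.range h = {n | ∃ w, n = Nat.pair w 0} ∪
      {n | ∃ i x z, θ i x = Part.some z ∧ n = Nat.pair (Nat.pair i x) (z + 1)}

/-- Condition (QGN II). -/
def QGN2 (A : Set ℕ) (θ : ℕ → ℕ →. ℕ) : Prop :=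
  ∀ k : ℕ → ℕ → ℕ, Computable₂ k →
    ∃ v : ℕ → ℕ, Computable v ∧
      ∀ i, ∀ r ∈ SA A, Set.range (k i) = graphE r → θ (v i) = r

/-- A quasi-Gödel numbering of `SA A`. -/
def QuasiGodel (A : Set ℕ) (θ : ℕ → ℕ →. ℕ) : Prop :=
  Set.range θ = SA A ∧ QGN1 θ ∧ QGN2 A θ

/-- A set of naturals is computably enumerable. -/
def CEset (C : Set ℕ) : Prop :=
  C = ∅ ∨ ∃ g : ℕ → ℕ, Computable g ∧ C = Set.range g

/-- The standard Gödel numbering of the unary partial recursive functions. -/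
def phi (i : ℕ) : ℕ →. ℕ :=
  Nat.Partrec.Code.eval (Denumerable.ofNat Nat.Partrec.Code i)

/- ### Auxiliary machinery -/

open List (Vector)
open Nat.Partrec (Code)

private lemma mem_mOfFn' : ∀ {n : ℕ} (g : Fin n → Part ℕ) (v : List.Vector ℕ n),
    v ∈ List.Vector.mOfFn g ↔ ∀ i, v.get i ∈ g i
  | 0, g, v => by
    simp only [List.Vector.mOfFn, pure, Part.mem_some_iff]
    constructor
    · rintro rfl i; exact i.elim0
    · intro _; symm; apply Subsingleton.elim
  | n + 1, g, v => by
    have IH := fun w => mem_mOfFn' (fun i => g i.succ) w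
    simp only [List.Vector.mOfFn, bind, pure, Part.bind_eq_bind, Part.mem_bind_iff,
      Part.mem_some_iff]
    constructor
    · rintro ⟨a, ha, w, hw, rfl⟩ i
      refine Fin.cases ?_ ?_ i
      · simpa using ha
      · intro j; simpa using (IH w).1 hw j
    · intro hi
      refine ⟨v.head, ?_, v.tail, (IH _).2 fun j => ?_, (v.cons_head_tail).symm⟩
      · simpa [List.Vector.get_zero] using hi 0
      · simpa [List.Vector.get_tail_succ] using hi j.succ

private lemma vector_get?_toList {α : Type*} {n : ℕ} (w : List.Vector α n) {x : ℕ} (hx : x < n) :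
    w.toList[x]? = some (w.get ⟨x, hx⟩) := by
  have hx' : x < w.toList.length := by rw [w.toList_length]; exact hx
  rw [List.getElem?_eq_getElem hx', List.Vector.get_eq_get_toList]
  rfl

/-- primitive recursive "filter" for the graph search -/
private def U (hn t : ℕ) : Option ℕ :=
  if hn.unpair.1 = t ∧ hn.unpair.2 ≠ 0 then some (hn.unpair.2 - 1) else none

private lemma primrec_U : Primrec₂ U := by
  have h1 : Primrec fun p : ℕ × ℕ => (Nat.unpair p.1).1 :=
    Primrec.fst.comp (Primrec.unpair.comp Primrec.fst)
  have h2 : Primrec fun p : ℕ × ℕ => (Nat.unpair p.1).2 :=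
    Primrec.snd.comp (Primrec.unpair.comp Primrec.fst)
  exact Primrec.ite
    ((Primrec.eq.comp h1 Primrec.snd).and ((Primrec.eq.comp h2 (Primrec.const 0)).not))
    (Primrec.option_some.comp (Primrec.pred.comp h2)) (Primrec.const none)

private lemma U_eq_some {hn t z : ℕ} :
    U hn t = some z ↔ hn.unpair.1 = t ∧ hn.unpair.2 ≠ 0 ∧ hn.unpair.2 - 1 = z := by
  unfold U; split <;> simp_all

/-- the auxiliary partial function searching the value of `θ (q m) x` in the range of `h`,
where `m` is the value of `phi j 0`. -/
private def psiF (h q : ℕ → ℕ) (j x : ℕ) : Part ℕ :=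
  (phi j 0).bind fun m => Nat.rfindOpt fun n => U (h n) (Nat.pair (q m) x)

private lemma psiF_partrec {h q : ℕ → ℕ} (hh : Computable h) (hq : Computable q) :
    Partrec₂ (psiF h q) := by
  have h0 : Partrec fun p : ℕ × ℕ => phi p.1 0 :=
    Nat.Partrec.Code.eval_part.comp ((Computable.ofNat Code).comp Computable.fst)
      (Computable.const 0)
  have h1 : Computable₂ fun (a : (ℕ × ℕ) × ℕ) (n : ℕ) => U (h n) (Nat.pair (q a.2) a.1.2) :=
    primrec_U.to_comp.comp (hh.comp Computable.snd)
      (Primrec₂.natPair.to_comp.comp (hq.comp (Computable.snd.comp Computable.fst))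
        (Computable.snd.comp (Computable.fst.comp Computable.fst)))
  exact h0.bind (Partrec.rfindOpt h1)

/-- the candidate initial segment function diagonalizing against `θ (q (phi j 0))`. -/
private def RF (h q : ℕ → ℕ) (a₀ : ℕ) (j x : ℕ) : Part ℕ :=
  (List.Vector.mOfFn fun i : Fin a₀ => psiF h q j (i : ℕ)).bind fun w =>
    Part.ofOption ((w.toList[x]?).map (· + 1))

private lemma RF_partrec {h q : ℕ → ℕ} (a₀ : ℕ) (hh : Computable h) (hq : Computable q) :
    Partrec₂ (RF h q a₀) := by
  have hψ := psiF_partrec hh hq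
  have h1 : Partrec fun p : ℕ × ℕ => List.Vector.mOfFn fun i : Fin a₀ => psiF h q p.1 (i : ℕ) :=
    Partrec.vector_mOfFn fun i => hψ.comp Computable.fst (Computable.const (i : ℕ))
  have h2 : Primrec fun pw : (ℕ × ℕ) × List.Vector ℕ a₀ => (pw.2.toList[pw.1.2]?).map (· + 1) :=
    Primrec.option_map
      (Primrec.list_getElem?.comp (Primrec.vector_toList.comp Primrec.snd)
        (Primrec.snd.comp Primrec.fst))
      (Primrec.succ.comp₂ Primrec₂.right)
  exact h1.bind (Computable.ofOption h2.to_comp).to₂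

private lemma mem_RF {h q : ℕ → ℕ} {a₀ j x y : ℕ} :
    y ∈ RF h q a₀ j x ↔ ∃ w : List.Vector ℕ a₀, (∀ i : Fin a₀, w.get i ∈ psiF h q j (i : ℕ)) ∧
      ∃ z, w.toList[x]? = some z ∧ y = z + 1 := by
  unfold RF
  simp only [Part.mem_bind_iff, Part.mem_ofOption, Option.mem_def, Option.map_eq_some_iff]
  constructor
  · rintro ⟨w, hw, z, hz, rfl⟩
    exact ⟨w, (mem_mOfFn' _ _).1 hw, z, hz, rfl⟩
  · rintro ⟨w, hw, z, hz, rfl⟩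
    exact ⟨w, (mem_mOfFn' _ _).2 hw, z, hz, rfl⟩

private lemma RF_dom {h q : ℕ → ℕ} {a₀ j x : ℕ} :
    (RF h q a₀ j x).Dom ↔ (∀ i : Fin a₀, (psiF h q j (i : ℕ)).Dom) ∧ x < a₀ := by
  rw [Part.dom_iff_mem]
  constructor
  · rintro ⟨y, hy⟩
    obtain ⟨w, hw, z, hz, rfl⟩ := mem_RF.1 hy
    refine ⟨fun i => Part.dom_iff_mem.2 ⟨w.get i, hw i⟩, ?_⟩
    obtain ⟨hlt, -⟩ := List.getElem?_eq_some_iff.1 hz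
    rwa [w.toList_length] at hlt
  · rintro ⟨hall, hx⟩
    set w : List.Vector ℕ a₀ := List.Vector.ofFn fun i => (psiF h q j (i : ℕ)).get (hall i) with hwdef
    refine ⟨w.get ⟨x, hx⟩ + 1,
      mem_RF.2 ⟨w, fun i => ?_, w.get ⟨x, hx⟩, vector_get?_toList w hx, rfl⟩⟩
    rw [hwdef, List.Vector.get_ofFn]
    exact Part.get_mem _

/-- searching the extended graph of `θ` finds exactly the right values -/
private lemma search_eq {θ : ℕ → ℕ →. ℕ} {h : ℕ → ℕ}
    (hh : Set.range h = {n | ∃ w, n = Nat.pair w 0} ∪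
      {n | ∃ i x z, θ i x = Part.some z ∧ n = Nat.pair (Nat.pair i x) (z + 1)})
    (u x z : ℕ) :
    z ∈ Nat.rfindOpt (fun n => U (h n) (Nat.pair u x)) ↔ θ u x = Part.some z := by
  have fwd : ∀ z', z' ∈ Nat.rfindOpt (fun n => U (h n) (Nat.pair u x)) →
      θ u x = Part.some z' := by
    intro z' hz'
    obtain ⟨n, hn⟩ := Nat.rfindOpt_spec hz'
    rw [Option.mem_def, U_eq_some] at hn
    obtain ⟨h1, h2, h3⟩ := hn
    have hmem : h n ∈ Set.range h := ⟨n, rfl⟩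
    rw [hh] at hmem
    rcases hmem with ⟨w, hw⟩ | ⟨i, x', z'', hθ, hw⟩
    · rw [hw, Nat.unpair_pair] at h2; exact absurd rfl h2
    · rw [hw, Nat.unpair_pair] at h1 h3
      obtain ⟨rfl, rfl⟩ := Nat.pair_eq_pair.1 h1
      rw [Nat.add_sub_cancel] at h3
      rw [← h3]; exact hθ
  constructor
  · exact fwd z
  · intro hθx
    have hmem : Nat.pair (Nat.pair u x) (z + 1) ∈ Set.range h := by
      rw [hh]; exact Or.inr ⟨u, x, z, hθx, rfl⟩
    obtain ⟨N, hN⟩ := hmem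
    have hUN : U (h N) (Nat.pair u x) = some z := by
      rw [hN, U_eq_some, Nat.unpair_pair]; simp
    have hdom : (Nat.rfindOpt fun n => U (h n) (Nat.pair u x)).Dom :=
      Nat.rfindOpt_dom.2 ⟨N, z, hUN⟩
    have hget := Part.get_mem hdom
    have := fwd _ hget
    rw [hθx] at this
    rw [Part.some_inj.1 this]
    exact hget

/-- enumerator of the extended graph of column `j` of the function coded by `c`. -/
private def kF (c : Code) (j n : ℕ) : ℕ :=
  if n % 2 = 0 then Nat.pair (n / 2) 0
  else
    Option.casesOn
      (Nat.Partrec.Code.evaln (Nat.unpair (n / 2)).2 c (Nat.pair j (Nat.unpair (n / 2)).1))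
      0 (fun z => Nat.pair (Nat.unpair (n / 2)).1 (z + 1))

private lemma kF_prim (c : Code) : Primrec₂ (kF c) := by
  have hu1 : Primrec fun p : ℕ × ℕ => (Nat.unpair (p.2 / 2)).1 :=
    Primrec.fst.comp (Primrec.unpair.comp (Primrec.nat_div.comp Primrec.snd (Primrec.const 2)))
  have hu2 : Primrec fun p : ℕ × ℕ => (Nat.unpair (p.2 / 2)).2 :=
    Primrec.snd.comp (Primrec.unpair.comp (Primrec.nat_div.comp Primrec.snd (Primrec.const 2)))
  have hev : Primrec fun p : ℕ × ℕ =>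
      Nat.Partrec.Code.evaln (Nat.unpair (p.2 / 2)).2 c (Nat.pair p.1 (Nat.unpair (p.2 / 2)).1) :=
    Nat.Partrec.Code.primrec_evaln.comp
      ((hu2.pair (Primrec.const c)).pair (Primrec₂.natPair.comp Primrec.fst hu1))
  exact Primrec.ite
    (Primrec.eq.comp (Primrec.nat_mod.comp Primrec.snd (Primrec.const 2)) (Primrec.const 0))
    (Primrec₂.natPair.comp (Primrec.nat_div.comp Primrec.snd (Primrec.const 2)) (Primrec.const 0))
    (Primrec.option_casesOn hev (Primrec.const 0)
      ((Primrec₂.natPair.comp (hu1.comp Primrec.fst) (Primrec.succ.comp Primrec.snd)).to₂))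

private lemma range_kF {c : Code} {F : ℕ → ℕ →. ℕ}
    (hc : Nat.Partrec.Code.eval c = fun n => F (Nat.unpair n).1 (Nat.unpair n).2) (j : ℕ) :
    Set.range (kF c j) = graphE (F j) := by
  have hev : ∀ x, Nat.Partrec.Code.eval c (Nat.pair j x) = F j x := fun x => by
    rw [hc]; simp
  ext y
  constructor
  · rintro ⟨n, rfl⟩
    unfold kF
    split
    · exact Or.inl ⟨n / 2, rfl⟩
    · rcases hev' : Nat.Partrec.Code.evaln (Nat.unpair (n / 2)).2 c
        (Nat.pair j (Nat.unpair (n / 2)).1) with _ | z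
      · exact Or.inl ⟨0, by simp [Nat.pair]⟩
      · have hsound : z ∈ Nat.Partrec.Code.eval c (Nat.pair j (Nat.unpair (n / 2)).1) :=
          Nat.Partrec.Code.evaln_sound (by rw [hev']; rfl)
        rw [hev] at hsound
        exact Or.inr ⟨_, z, Part.eq_some_iff.2 hsound, rfl⟩
  · rintro (⟨w, rfl⟩ | ⟨x, z, hxz, rfl⟩)
    · refine ⟨2 * w, ?_⟩
      unfold kF
      rw [if_pos (by omega)]
      congr 1
      omega
    · have hz : z ∈ Nat.Partrec.Code.eval c (Nat.pair j x) := by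
        rw [hev, hxz]; exact Part.mem_some z
      obtain ⟨s, hs⟩ := Nat.Partrec.Code.evaln_complete.1 hz
      refine ⟨2 * Nat.pair x s + 1, ?_⟩
      unfold kF
      rw [if_neg (by omega)]
      have h3 : (2 * Nat.pair x s + 1) / 2 = Nat.pair x s := by omega
      rw [h3, Nat.unpair_pair]
      rw [show Nat.Partrec.Code.evaln s c (Nat.pair j x) = some z from hs]

/-- No effective totalization: no total computable function can produce, from an index
of an initial-segment function, an index of a proper total extension of it. -/
theorem no_effective_totalization (A : Set ℕ) (hAinf : A.Infinite) (hAce : CEset A)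
    (θ : ℕ → ℕ →. ℕ) (hθ : QuasiGodel A θ) :
    ¬ ∃ q : ℕ → ℕ, Computable q ∧
        ∀ i, IsInitSeg A (θ i) →
          (∀ x, (θ (q i) x).Dom) ∧ pgraph (θ i) ⊂ pgraph (θ (q i)) := by
  rintro ⟨q, hqc, hq⟩
  obtain ⟨hrange, ⟨h, hhc, hh⟩, hqgn2⟩ := hθ
  obtain ⟨a₀, ha₀A, ha₀pos⟩ := hAinf.exists_gt 0
  -- a code for the uncurried `RF h q a₀`
  have hRp : Partrec₂ (RF h q a₀) := RF_partrec a₀ hhc hqc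
  have hRp' : Nat.Partrec fun n => RF h q a₀ (Nat.unpair n).1 (Nat.unpair n).2 :=
    Partrec.nat_iff.1 (hRp.comp (Computable.fst.comp Computable.unpair)
      (Computable.snd.comp Computable.unpair))
  obtain ⟨c, hc⟩ := Nat.Partrec.Code.exists_code.1 hRp'
  -- apply (QGN II) to the enumerator of the extended graphs of the `RF h q a₀ j`
  obtain ⟨v, hvc, hv⟩ := hqgn2 (kF c) (kF_prim c).to_comp
  -- a fixed point
  have hfp : Partrec₂ fun (cd : Code) => ((fun _ : ℕ => v (Encodable.encode cd)) : ℕ →. ℕ) :=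
    Computable₂.partrec₂ ((hvc.comp (Computable.encode.comp Computable.fst)).to₂)
  obtain ⟨c₀, hc₀⟩ := Nat.Partrec.Code.fixed_point₂ hfp
  set e := Encodable.encode c₀ with he
  set m := v e with hm
  have hphi : phi e 0 = Part.some m := by
    show Nat.Partrec.Code.eval (Denumerable.ofNat Code e) 0 = _
    rw [he, Denumerable.ofNat_encode, hc₀]
    rfl
  -- the values of `psiF h q e`
  have hpsi : ∀ x z, psiF h q e x = Part.some z ↔ θ (q m) x = Part.some z := by
    intro x z
    unfold psiF
    rw [hphi, Part.bind_some]
    constructor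
    · intro hr
      exact (search_eq hh (q m) x z).1 (by rw [hr]; exact Part.mem_some z)
    · intro ht
      exact Part.eq_some_iff.2 ((search_eq hh (q m) x z).2 ht)
  have hinitR : IsInitSeg A (RF h q a₀ e) := by
    by_cases hall : ∀ i : Fin a₀, (psiF h q e (i : ℕ)).Dom
    · right
      exact ⟨a₀, ha₀A, Set.ext fun x => by
        simp only [Set.mem_setOf_eq, RF_dom]
        exact ⟨fun hp => hp.2, fun hx => ⟨hall, hx⟩⟩⟩
    · left
      exact Set.eq_empty_iff_forall_notMem.2 fun x hx => hall (RF_dom.1 hx).1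
  have hθm : θ m = RF h q a₀ e := hv e _ (Or.inr hinitR) (range_kF hc e)
  obtain ⟨htot, hsub⟩ := hq m (by rw [hθm]; exact hinitR)
  have hallpsi : ∀ x : ℕ, psiF h q e x = Part.some ((θ (q m) x).get (htot x)) := fun x =>
    (hpsi x _).2 (Part.some_get (htot x)).symm
  set z := (θ (q m) 0).get (htot 0) with hzdef
  have hz : θ (q m) 0 = Part.some z := (Part.some_get (htot 0)).symm
  set w : List.Vector ℕ a₀ :=
    List.Vector.ofFn (fun i : Fin a₀ => (θ (q m) (i : ℕ)).get (htot (i : ℕ))) with hwdef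
  have hR0 : (z + 1) ∈ RF h q a₀ e 0 := by
    refine mem_RF.2 ⟨w, fun i => ?_, z, ?_, rfl⟩
    · rw [hwdef, List.Vector.get_ofFn, hallpsi]
      exact Part.mem_some _
    · rw [vector_get?_toList w ha₀pos]
      congr 1
      rw [hwdef, List.Vector.get_ofFn]
  have hmem1 : Nat.pair 0 (z + 1) ∈ pgraph (θ m) :=
    ⟨0, z + 1, by rw [hθm]; exact Part.eq_some_iff.2 hR0, rfl⟩
  obtain ⟨x', z', hx'z', hpair⟩ := hsub.1 hmem1
  obtain ⟨hx0, hzz⟩ := Nat.pair_eq_pair.1 hpair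
  rw [← hx0, ← hzz] at hx'z'
  rw [hz] at hx'z'
  exact absurd (Part.some_inj.1 hx'z') (by omega)
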